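/- For every σ ∈ {1,…,q−1} and every u ≥ 0: f(σ 0^{u}) is a block in B_{q,ℓ,r}, and σ 0^{u} is an output of f(σ 0^{u}) under the (ℓ,r)-0-insertion channel (so every block is confusable with its image under f). -/

import Mathlib

namespace ZeroErrorDup

/-- Output relation of the (ℓ,r)-0-insertion channel acting on strings over the
alphabet A_q = {0,1,…,q−1} (encoded as lists of naturals): after each input symbol,
`c` copies of the block `0^ℓ` are inserted, for some `c ∈ {0,1,…,r}`. -/
inductive IsOutput (ℓ r : ℕ) : List ℕ → List ℕ → Prop
  | nil : IsOutput ℓ r [] []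
  | cons (a : ℕ) (c : ℕ) (hc : c ≤ r) {x y : List ℕ} :
      IsOutput ℓ r x y → IsOutput ℓ r (a :: x) (a :: (List.replicate (c * ℓ) 0 ++ y))

/-- Two strings are confusable if some string is an output of both. -/
def Confusable (ℓ r : ℕ) (x y : List ℕ) : Prop :=
  ∃ z, IsOutput ℓ r x z ∧ IsOutput ℓ r y z

/-- A set of strings is a zero-error code if every two distinct elements are
non-confusable. -/
def ZeroErrorCode (ℓ r : ℕ) (C : Set (List ℕ)) : Prop :=
  ∀ x ∈ C, ∀ y ∈ C, x ≠ y → ¬ Confusable ℓ r x y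

/-- `L ℓ r i j = ((r i + 1)(r ℓ + 1)^j − 1)/r − 1` (the division is exact). -/
def L (ℓ r i j : ℕ) : ℕ := ((r * i + 1) * (r * ℓ + 1) ^ j - 1) / r - 1

/-- The block `σ 0^u`: the symbol `σ` followed by a run of `u` zeros. -/
def block (σ u : ℕ) : List ℕ := σ :: List.replicate u 0

/-- `B q ℓ r`: the set of blocks `σ 0^{L(i,j)}` with `σ ∈ {1,…,q−1}`, `1 ≤ i ≤ ℓ`, `j ≥ 0`. -/
def B (q ℓ r : ℕ) : Set (List ℕ) :=
  { b | ∃ σ i j : ℕ, 1 ≤ σ ∧ σ ≤ q - 1 ∧ 1 ≤ i ∧ i ≤ ℓ ∧ b = block σ (L ℓ r i j) }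

/-- Reduced run length: the largest integer of the form `L ℓ r i j` (with `1 ≤ i ≤ ℓ`,
`j ≥ 0`) that is at most `u` and congruent to `u` modulo `ℓ` (such an integer always
exists). -/
noncomputable def g (ℓ r u : ℕ) : ℕ :=
  sSup { m | (∃ i j : ℕ, 1 ≤ i ∧ i ≤ ℓ ∧ m = L ℓ r i j) ∧ m ≤ u ∧ m % ℓ = u % ℓ }

/-- The map `f`, shortening each maximal run of zeros of length `u` to length `g ℓ r u`
and leaving all nonzero symbols in place. -/
noncomputable def f (ℓ r : ℕ) (x : List ℕ) : List ℕ :=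
  match h : x.dropWhile (· == 0) with
  | [] => List.replicate (g ℓ r (x.takeWhile (· == 0)).length) 0
  | a :: t =>
      List.replicate (g ℓ r (x.takeWhile (· == 0)).length) 0 ++ a :: f ℓ r t
termination_by x.length
decreasing_by
  have h1 : (x.dropWhile (· == 0)).length ≤ x.length :=
    (List.dropWhile_sublist _).length_le
  rw [h] at h1
  simp only [List.length_cons] at h1
  omega

lemma f_nil_case (ℓ r : ℕ) (x : List ℕ) (h : x.dropWhile (· == 0) = []) :
    f ℓ r x = List.replicate (g ℓ r (x.takeWhile (· == 0)).length) 0 := by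
  rw [f]
  split <;> simp_all

lemma f_cons_case (ℓ r : ℕ) (x : List ℕ) (a : ℕ) (t : List ℕ)
    (h : x.dropWhile (· == 0) = a :: t) :
    f ℓ r x = List.replicate (g ℓ r (x.takeWhile (· == 0)).length) 0 ++ a :: f ℓ r t := by
  rw [f]
  split <;> simp_all


lemma L_key (ℓ r i j : ℕ) (hr : 1 ≤ r) (hi : 1 ≤ i) :
    r * (L ℓ r i j + 1) + 1 = (r * i + 1) * (r * ℓ + 1) ^ j := by
  have hP : r * i + 1 ≤ (r * i + 1) * (r * ℓ + 1) ^ j :=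
    Nat.le_mul_of_pos_right _ (Nat.pow_pos (by omega))
  have e1 : (r * i + 1) % r = 1 % r := Nat.mul_add_mod r i 1
  have e2 : (r * ℓ + 1) % r = 1 % r := Nat.mul_add_mod r ℓ 1
  have hmod : ((r * i + 1) * (r * ℓ + 1) ^ j) % r = (1 * 1 ^ j) % r :=
    Nat.ModEq.mul e1 (Nat.ModEq.pow j e2)
  simp only [one_pow, one_mul] at hmod
  have hdvd : r ∣ (r * i + 1) * (r * ℓ + 1) ^ j - 1 :=
    (Nat.modEq_iff_dvd' (by omega)).mp (Nat.ModEq.symm hmod)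
  obtain ⟨k, hk⟩ := hdvd
  have hk1 : i ≤ k := Nat.le_of_mul_le_mul_left (by omega : r * i ≤ r * k) (by omega)
  unfold L
  rw [hk, Nat.mul_div_cancel_left _ (by omega : 0 < r)]
  have hk2 : k - 1 + 1 = k := by omega
  rw [hk2]; omega

lemma L_zero (ℓ r i : ℕ) (hr : 1 ≤ r) (hi : 1 ≤ i) : L ℓ r i 0 = i - 1 := by
  have := L_key ℓ r i 0 hr hi
  simp at this; omega

lemma L_succ (ℓ r i j : ℕ) (hr : 1 ≤ r) (hi : 1 ≤ i) :
    L ℓ r i (j + 1) = L ℓ r i j + r * ℓ * (L ℓ r i j + 1) + ℓ := by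
  have h1 := L_key ℓ r i j hr hi
  have h2 := L_key ℓ r i (j + 1) hr hi
  rw [pow_succ, ← mul_assoc, ← h1] at h2
  have h3 : r * (L ℓ r i (j + 1) + 1) = r * (L ℓ r i j + r * ℓ * (L ℓ r i j + 1) + ℓ + 1) := by
    ring_nf at h2 ⊢; omega
  exact Nat.add_right_cancel (Nat.eq_of_mul_eq_mul_left (by omega) h3 : _ = _ + 1)



lemma g_spec (ℓ r u : ℕ) (hℓ : 1 ≤ ℓ) (hr : 1 ≤ r) :
    ((∃ i j : ℕ, 1 ≤ i ∧ i ≤ ℓ ∧ g ℓ r u = L ℓ r i j) ∧ g ℓ r u ≤ u ∧ g ℓ r u % ℓ = u % ℓ)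
    ∧ ∀ m, ((∃ i j : ℕ, 1 ≤ i ∧ i ≤ ℓ ∧ m = L ℓ r i j) ∧ m ≤ u ∧ m % ℓ = u % ℓ) → m ≤ g ℓ r u := by
  set S := { m | (∃ i j : ℕ, 1 ≤ i ∧ i ≤ ℓ ∧ m = L ℓ r i j) ∧ m ≤ u ∧ m % ℓ = u % ℓ } with hS
  have hne : S.Nonempty := by
    refine ⟨u % ℓ, ⟨⟨u % ℓ + 1, 0, by omega, ?_, ?_⟩, Nat.mod_le u ℓ,
      Nat.mod_mod_of_dvd u dvd_rfl⟩⟩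
    · have := Nat.mod_lt u (show 0 < ℓ by omega); omega
    · rw [L_zero ℓ r _ hr (by omega)]; omega
  have hbdd : BddAbove S := ⟨u, fun m hm => hm.2.1⟩
  have hmem : sSup S ∈ S := Nat.sSup_mem hne hbdd
  exact ⟨hmem, fun m hm => le_csSup hbdd hm⟩

lemma rep_out (ℓ r : ℕ) : ∀ m t : ℕ, t ≤ r * m →
    IsOutput ℓ r (List.replicate m 0) (List.replicate (m + t * ℓ) 0) := by
  intro m
  induction m with
  | zero => intro t ht; simp_all; exact IsOutput.nil
  | succ m ih =>
    intro t ht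
    have hrm : r * (m + 1) = r * m + r := by ring
    have h1 : t - min t r ≤ r * m := by omega
    have := IsOutput.cons 0 (min t r) (by omega) (ih (t - min t r) h1)
    have heq : (0 : ℕ) :: (List.replicate (min t r * ℓ) 0 ++ List.replicate (m + (t - min t r) * ℓ) 0)
        = List.replicate (m + 1 + t * ℓ) 0 := by
      rw [← List.replicate_add]
      rw [show min t r * ℓ + (m + (t - min t r) * ℓ) = m + t * ℓ by
        have : min t r * ℓ + (t - min t r) * ℓ = t * ℓ := by
          rw [← Nat.add_mul]; congr 1; omega
        omega]
      rw [show m + 1 + t * ℓ = (m + t * ℓ) + 1 by omega, List.replicate_succ]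
    rw [List.replicate_succ]
    rwa [heq] at this

/-- for every `σ ∈ {1,…,q−1}` and `u ≥ 0`, `f (σ 0^u)` is a block of
`B q ℓ r`, and `σ 0^u` is an output of `f (σ 0^u)` under the (ℓ,r)-0-insertion channel
(so every block is confusable with its image under `f`). -/
theorem stmt7 (q ℓ r : ℕ) (hq : 2 ≤ q) (hℓ : 1 ≤ ℓ) (hr : 1 ≤ r)
    (σ u : ℕ) (hσ1 : 1 ≤ σ) (hσ2 : σ ≤ q - 1) :
    f ℓ r (block σ u) ∈ B q ℓ r ∧ IsOutput ℓ r (f ℓ r (block σ u)) (block σ u) := by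
  obtain ⟨⟨⟨i, j, hi1, hi2, hgL⟩, hgu, hgmod⟩, hmax⟩ := g_spec ℓ r u hℓ hr
  have hσ0 : (σ == 0) = false := by simp; omega
  have hg0 : g ℓ r 0 = 0 := by
    obtain ⟨⟨_, h0, _⟩, _⟩ := g_spec ℓ r 0 hℓ hr
    omega
  have hdrop : (block σ u).dropWhile (· == 0) = σ :: List.replicate u 0 := by
    rw [block, List.dropWhile_cons_of_neg (by simp [hσ0])]
  have htake : (block σ u).takeWhile (· == 0) = [] := by
    rw [block, List.takeWhile_cons_of_neg (by simp [hσ0])]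
  have hfz : f ℓ r (List.replicate u 0) = List.replicate (g ℓ r u) 0 := by
    rw [f_nil_case ℓ r _ (by simp), List.takeWhile_replicate_eq_filter]
    simp
  have hf : f ℓ r (block σ u) = block σ (g ℓ r u) := by
    rw [f_cons_case ℓ r _ σ (List.replicate u 0) hdrop, htake, hfz]
    simp [hg0, block]
  refine ⟨?_, ?_⟩
  · rw [hf, hgL]; exact ⟨σ, i, j, hσ1, hσ2, hi1, hi2, rfl⟩
  · rw [hf]
    set m := g ℓ r u with hm
    obtain ⟨t, htt⟩ := (Nat.modEq_iff_dvd' hgu).mp hgmod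
    have hu : u = m + ℓ * t := by omega
    have hub : t ≤ r * (m + 1) := by
      by_contra hcon
      push_neg at hcon
      have hnext : L ℓ r i (j + 1) = m + ℓ * (r * (m + 1) + 1) := by
        rw [L_succ ℓ r i j hr hi1, ← hgL]; ring
      have hle : L ℓ r i (j + 1) ≤ u := by
        rw [hnext, hu]
        have h2 : ℓ * (r * (m + 1) + 1) ≤ ℓ * t := Nat.mul_le_mul_left ℓ (by omega)
        omega
      have hmod2 : L ℓ r i (j + 1) % ℓ = u % ℓ := by
        rw [hnext, Nat.add_mul_mod_self_left]
        exact hgmod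
      have hle2 := hmax _ ⟨⟨i, j + 1, hi1, hi2, rfl⟩, hle, hmod2⟩
      rw [hnext] at hle2
      have hpos : 1 ≤ ℓ * (r * (m + 1) + 1) := Nat.mul_pos (by omega) (by omega)
      omega
    have hrm : r * (m + 1) = r * m + r := by ring
    have hsplit : t - min t r ≤ r * m := by omega
    have hrec := rep_out ℓ r m (t - min t r) hsplit
    have hout := IsOutput.cons σ (min t r) (by omega) hrec
    have heq : σ :: (List.replicate (min t r * ℓ) 0 ++ List.replicate (m + (t - min t r) * ℓ) 0)
        = block σ u := by
      rw [← List.replicate_add, block]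
      congr 1
      congr 1
      have h3 : min t r * ℓ + (t - min t r) * ℓ = t * ℓ := by
        rw [← Nat.add_mul]; congr 1; omega
      have h4 : t * ℓ = ℓ * t := mul_comm t ℓ
      omega
    rwa [heq] at hout


end ZeroErrorDup
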